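/- Consider the family of maps Φ_k: blow-up of ℙ¹ × 𝔸¹ at (0,0) → (ℙ¹)³ whose fiber over c ∈ 𝔸¹ \ {0} is φ_{k,c}(ξ) = (ξ^{k a₁}, c^{-k a₂} ξ^{k a₂}, 0). As c → 0, the fiber over 0 is the nodal curve ℙ¹ ⊔_pt ℙ¹ (two lines glued at a point) mapping by ξ₁ ↦ (ξ₁^{k a₁}, 0, 0) on one component and ξ₂ ↦ (0, ξ₂^{-k a₂}, 0) on the other, with the node mapping to (0,0,0). -/
import Mathlib


/-- The extended family `Φ_k` on the blow-up chart, given by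
`G(ξ, v) = (ξ^{ka₁}, v^{-ka₂}, 0)`:
* over `c ≠ 0` (more generally along `ξ ≠ 0` with `v = c/ξ`) it restricts to
  `φ_{k,c}(ξ) = (ξ^{ka₁}, c^{-ka₂} ξ^{ka₂}, 0)`;
* the central fiber `c = 0` is the nodal union `{v = 0} ∪ {ξ = 0}`, on which
  `G` restricts to `ξ₁ ↦ (ξ₁^{ka₁}, 0, 0)` and `ξ₂ ↦ (0, ξ₂^{-ka₂}, 0)`,
  with the node `(0,0)` mapping to the origin `(0,0,0)`. -/
theorem stmt_10 (a₁ a₂ k : ℤ) (h₁ : 0 < a₁) (h₂ : a₂ < 0) (hk : 0 < k)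
    (G : ℂ × ℂ → ℂ × ℂ × ℂ)
    (hG : ∀ ξ v : ℂ, G (ξ, v) = (ξ ^ (k * a₁).toNat, v ^ (-(k * a₂)).toNat, 0)) :
    (∀ c ξ : ℂ, ξ ≠ 0 →
      G (ξ, c / ξ) = (ξ ^ (k * a₁), c ^ (-(k * a₂)) * ξ ^ (k * a₂), (0 : ℂ))) ∧
    (∀ ξ₁ : ℂ, G (ξ₁, 0) = (ξ₁ ^ (k * a₁), 0, 0)) ∧
    (∀ ξ₂ : ℂ, G (0, ξ₂) = (0, ξ₂ ^ (-(k * a₂)), 0)) ∧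
    G (0, 0) = (0, 0, 0) := by
  have hka₁ : (0:ℤ) < k * a₁ := mul_pos hk h₁
  have hka₂ : (0:ℤ) < -(k * a₂) := by nlinarith
  have h1 : ((k * a₁).toNat : ℤ) = k * a₁ := Int.toNat_of_nonneg hka₁.le
  have h2 : ((-(k * a₂)).toNat : ℤ) = -(k * a₂) := Int.toNat_of_nonneg hka₂.le
  have e1 : ∀ x : ℂ, x ^ (k * a₁) = x ^ (k * a₁).toNat := by
    intro x; conv_lhs => rw [← h1, zpow_natCast]
  have e2 : ∀ x : ℂ, x ^ (-(k * a₂)) = x ^ (-(k * a₂)).toNat := by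
    intro x; conv_lhs => rw [← h2, zpow_natCast]
  have hn1 : (k * a₁).toNat ≠ 0 := by omega
  have hn2 : (-(k * a₂)).toNat ≠ 0 := by omega
  refine ⟨?_, ?_, ?_, ?_⟩
  · intro c ξ hξ
    rw [hG, e1, e2]
    have : ξ ^ (k * a₂) = (ξ ^ (-(k * a₂)).toNat)⁻¹ := by
      rw [← e2, ← zpow_neg, neg_neg]
    rw [this, div_pow, div_eq_mul_inv]
  · intro ξ₁
    rw [hG, e1, zero_pow hn2]
  · intro ξ₂
    rw [hG, e2, zero_pow hn1]
  · rw [hG, zero_pow hn1, zero_pow hn2]
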